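/- For every real ε ∈ (0,1] and every integer k ≥ 2, the quantity H(ε,k) := ((1 − ε/k)/ε²) · (log((1 + (1 − 1/k)·ε)/(1 − ε/k)))² satisfies H(ε,k) ≥ (log 2)². -/

import Mathlib

set_option autoImplicit false

/-- For `ε ∈ (0,1]` and integer `k ≥ 2`,
`H(ε,k) := ((1 − ε/k)/ε²) (log((1 + (1 − 1/k)ε)/(1 − ε/k)))² ≥ (log 2)²`. -/

lemma log_three_le : Real.log 3 ≤ 4/3 := by
  have he : (2.25 : ℝ) < Real.exp 1 := by
    have := Real.exp_one_gt_d9; linarith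
  have h1 : Real.log (3 / Real.exp 1) ≤ 3 / Real.exp 1 - 1 :=
    Real.log_le_sub_one_of_pos (by positivity)
  have h2 : Real.log (3 / Real.exp 1) = Real.log 3 - 1 := by
    rw [Real.log_div (by norm_num) (Real.exp_ne_zero 1), Real.log_exp]
  have h3 : 3 / Real.exp 1 ≤ 3 / 2.25 := by
    apply div_le_div_of_nonneg_left (by norm_num) (by norm_num) he.le
  have : (3 : ℝ) / 2.25 = 4/3 := by norm_num
  linarith

lemma log_chord {u : ℝ} (h1 : 1/3 ≤ u) (h2 : u ≤ 1) : 2*u - 2 ≤ Real.log u := by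
  have hcc := strictConcaveOn_log_Ioi.concaveOn
  set l : ℝ := (3/2)*(1-u) with hl
  have hl0 : 0 ≤ l := by rw [hl]; nlinarith
  have hl1 : 1 - l ≥ 0 := by rw [hl]; nlinarith
  have key := hcc.2 (x := 1/3) (y := 1) (by norm_num : (1/3:ℝ) ∈ Set.Ioi (0:ℝ))
    (by norm_num : (1:ℝ) ∈ Set.Ioi (0:ℝ)) hl0 hl1 (by ring)
  have hcomb : l • (1/3 : ℝ) + (1 - l) • (1:ℝ) = u := by
    simp only [smul_eq_mul]; rw [hl]; ring
  rw [hcomb] at key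
  have h13 : Real.log (1/3) = -Real.log 3 := by
    rw [one_div, Real.log_inv]
  simp only [smul_eq_mul, Real.log_one, mul_zero, add_zero, h13] at key
  have h3 := log_three_le
  nlinarith [Real.log_nonneg (by norm_num : (1:ℝ) ≤ 3)]

lemma log_upper {x : ℝ} (h1 : 1 ≤ x) (h3 : x ≤ 3) : Real.log x ≤ 2 - 2/x := by
  have hx0 : 0 < x := by linarith
  have hu1 : 1/3 ≤ 1/x := by
    rw [div_le_div_iff₀ (by norm_num) hx0]; linarith
  have hu2 : 1/x ≤ 1 := by
    rw [div_le_one hx0]; linarith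
  have h := log_chord hu1 hu2
  rw [one_div, Real.log_inv] at h
  have hx : 2 * x⁻¹ = 2 / x := by rw [div_eq_mul_inv]
  linarith

lemma log_lower {ε : ℝ} (h0 : 0 ≤ ε) (h1 : ε ≤ 1) : ε * Real.log 2 ≤ Real.log (1+ε) := by
  have key := convexOn_exp.2 (Set.mem_univ (0:ℝ)) (Set.mem_univ (Real.log 2))
    (by linarith : (0:ℝ) ≤ 1 - ε) h0 (by ring)
  simp only [smul_eq_mul, mul_zero, zero_add, Real.exp_zero, mul_one,
    Real.exp_log (by norm_num : (0:ℝ) < 2)] at key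
  have : Real.exp (ε * Real.log 2) ≤ 1 + ε := by linarith
  calc ε * Real.log 2 = Real.log (Real.exp (ε * Real.log 2)) := (Real.log_exp _).symm
    _ ≤ Real.log (1+ε) := Real.log_le_log (by positivity) this

theorem stmt_5 (ε : ℝ) (hε0 : 0 < ε) (hε1 : ε ≤ 1) (k : ℕ) (hk : 2 ≤ k) :
    (Real.log 2) ^ 2 ≤
      ((1 - ε / (k : ℝ)) / ε ^ 2) *
        (Real.log ((1 + (1 - 1 / (k : ℝ)) * ε) / (1 - ε / (k : ℝ)))) ^ 2 := by
  have hk2 : (2:ℝ) ≤ (k:ℝ) := by exact_mod_cast hk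
  have hkpos : (0:ℝ) < (k:ℝ) := by linarith
  set a : ℝ := ε / (k:ℝ) with hadef
  have ha0 : 0 < a := div_pos hε0 hkpos
  have haeps : a ≤ ε / 2 := by
    rw [hadef]
    apply div_le_div_of_nonneg_left hε0.le (by norm_num) hk2
  have hahalf : a ≤ 1/2 := by linarith
  set L : ℝ → ℝ := fun x => Real.log (1+ε-x) - Real.log (1-x) with hLdef
  set F : ℝ → ℝ := fun x => (1-x) * (L x)^2 with hFdef
  -- basic positivity on Icc 0 (1/2)
  have hpos : ∀ x ∈ Set.Icc (0:ℝ) (1/2), 0 < 1 - x ∧ 0 < 1 + ε - x := by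
    intro x hx
    obtain ⟨hx0, hx1⟩ := hx
    constructor <;> linarith
  -- derivative of F
  have hder : ∀ x ∈ Set.Icc (0:ℝ) (1/2),
      HasDerivAt F ((-1) * (L x)^2 + (1-x) * ((2:ℕ) * (L x)^1 * ((-1)/(1+ε-x) - (-1)/(1-x)))) x := by
    intro x hx
    obtain ⟨h1x, h2x⟩ := hpos x hx
    have hA : HasDerivAt (fun y : ℝ => 1+ε-y) (-1) x := by
      simpa using (hasDerivAt_id x).const_sub (1+ε)
    have hB : HasDerivAt (fun y : ℝ => 1-y) (-1) x := by
      simpa using (hasDerivAt_id x).const_sub (1:ℝ)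
    have hAl : HasDerivAt (fun y : ℝ => Real.log (1+ε-y)) ((-1)/(1+ε-x)) x :=
      hA.log (ne_of_gt h2x)
    have hBl : HasDerivAt (fun y : ℝ => Real.log (1-y)) ((-1)/(1-x)) x :=
      hB.log (ne_of_gt h1x)
    have hLd : HasDerivAt L ((-1)/(1+ε-x) - (-1)/(1-x)) x := hAl.sub hBl
    have hL2 : HasDerivAt (fun y => (L y)^2)
        ((2:ℕ) * (L x)^1 * ((-1)/(1+ε-x) - (-1)/(1-x))) x := by
      exact hLd.pow 2
    exact hB.mul hL2
  -- the derivative is nonneg on the interior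
  have hdnn : ∀ x ∈ interior (Set.Icc (0:ℝ) (1/2)), 0 ≤ deriv F x := by
    intro x hx
    rw [interior_Icc] at hx
    obtain ⟨hx0, hx1⟩ := hx
    have hxm : x ∈ Set.Icc (0:ℝ) (1/2) := ⟨hx0.le, hx1.le⟩
    obtain ⟨h1x, h2x⟩ := hpos x hxm
    rw [(hder x hxm).deriv]
    have hq1 : (1:ℝ) ≤ (1+ε-x)/(1-x) := by
      rw [le_div_iff₀ h1x]; linarith
    have hq3 : (1+ε-x)/(1-x) ≤ 3 := by
      rw [div_le_iff₀ h1x]; linarith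
    have hLx : L x = Real.log ((1+ε-x)/(1-x)) := by
      rw [hLdef]
      exact (Real.log_div (ne_of_gt h2x) (ne_of_gt h1x)).symm
    have hL0 : 0 ≤ L x := by rw [hLx]; exact Real.log_nonneg hq1
    have hLup : L x ≤ 2*ε/(1+ε-x) := by
      rw [hLx]
      have := log_upper hq1 hq3
      have heq : 2 - 2/((1+ε-x)/(1-x)) = 2*ε/(1+ε-x) := by
        rw [div_div_eq_mul_div]
        field_simp
        ring
      linarith [heq ▸ this]
    have hkey : (-1) * (L x)^2 + (1-x) * ((2:ℕ) * (L x)^1 * ((-1)/(1+ε-x) - (-1)/(1-x)))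
        = L x * (2*ε/(1+ε-x) - L x) := by
      field_simp
      ring
    rw [hkey]
    exact mul_nonneg hL0 (by linarith)
  -- monotonicity
  have hmono : MonotoneOn F (Set.Icc (0:ℝ) (1/2)) := by
    apply monotoneOn_of_deriv_nonneg (convex_Icc _ _)
    · intro x hx
      exact ((hder x hx).continuousAt).continuousWithinAt
    · intro x hx
      rw [interior_Icc] at hx
      exact ((hder x ⟨hx.1.le, hx.2.le⟩).differentiableAt).differentiableWithinAt
    · exact hdnn
  have hF0a : F 0 ≤ F a :=
    hmono (by constructor <;> norm_num) ⟨ha0.le, hahalf⟩ ha0.le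
  have hF0 : F 0 = (Real.log (1+ε))^2 := by
    simp [hFdef, hLdef]
  -- rewrite the goal
  have hgoal1 : 1 + (1 - 1/(k:ℝ)) * ε = 1 + ε - a := by
    rw [hadef]; field_simp; ring
  have hgoal2 : (1:ℝ) - ε/(k:ℝ) = 1 - a := by rw [hadef]
  rw [hgoal1, hgoal2]
  obtain ⟨h1a, h2a⟩ := hpos a ⟨ha0.le, hahalf⟩
  have hlogq : Real.log ((1+ε-a)/(1-a)) = L a := by
    rw [hLdef]
    exact Real.log_div (ne_of_gt h2a) (ne_of_gt h1a)
  rw [hlogq]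
  have hsq : (ε * Real.log 2)^2 ≤ (Real.log (1+ε))^2 := by
    have h2 := Real.log_nonneg (by norm_num : (1:ℝ) ≤ 2)
    have := log_lower hε0.le hε1
    nlinarith [mul_nonneg hε0.le h2]
  have hε2 : (0:ℝ) < ε^2 := by positivity
  rw [div_mul_eq_mul_div, le_div_iff₀ hε2]
  calc Real.log 2 ^ 2 * ε ^ 2 = (ε * Real.log 2)^2 := by ring
    _ ≤ (Real.log (1+ε))^2 := hsq
    _ = F 0 := hF0.symm
    _ ≤ F a := hF0a
    _ = (1-a) * (L a)^2 := rfl
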